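/- In propositional multirole logic MRL, multiparty cut (mp-cut) is admissible: for n ≥ 1, if R₁, ..., Rₙ ⊆ R₀ satisfy that the complements R₀ \ R₁, ..., R₀ \ Rₙ are pairwise disjoint with union R₀, and each sequent Γᵢ, ⟨Rᵢ⟩A is derivable, then the sequent Γ₁, ..., Γₙ is derivable. -/

import Mathlib

/-- Formulas of propositional multirole logic over role set `ρ`:
atoms, generalized negation `¬_f`, and conjunction `∧_U`. -/
inductive MFormula (ρ : Type) : Type where
  | atom : ℕ → MFormula ρ
  | neg  : (ρ → ρ) → MFormula ρ → MFormula ρ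
  | conj : Ultrafilter ρ → MFormula ρ → MFormula ρ → MFormula ρ

/-- Sequents: multisets of i-formulas `⟨R⟩A`. -/
abbrev MSeq (ρ : Type) := Multiset (Set ρ × MFormula ρ)

/-- Derivability in propositional MRL. -/
inductive MDeriv {ρ : Type} : MSeq ρ → Prop where
  | id (Γ : MSeq ρ) (a : ℕ) (L : List (Set ρ)) :
      L.Pairwise Disjoint → (⋃ R ∈ L, R) = Set.univ →
      MDeriv (Γ + (↑(L.map fun R => ((R, MFormula.atom a) : Set ρ × MFormula ρ)) : MSeq ρ))
  | contract (Γ : MSeq ρ) (R : Set ρ) (A : MFormula ρ) :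
      MDeriv ((R, A) ::ₘ (R, A) ::ₘ Γ) → MDeriv ((R, A) ::ₘ Γ)
  | neg (Γ : MSeq ρ) (R : Set ρ) (f : ρ → ρ) (A : MFormula ρ) :
      MDeriv ((f ⁻¹' R, A) ::ₘ Γ) → MDeriv ((R, MFormula.neg f A) ::ₘ Γ)
  | conj_neg_l (Γ : MSeq ρ) (R : Set ρ) (U : Ultrafilter ρ) (A B : MFormula ρ) :
      R ∉ U → MDeriv ((R, A) ::ₘ Γ) → MDeriv ((R, MFormula.conj U A B) ::ₘ Γ)
  | conj_neg_r (Γ : MSeq ρ) (R : Set ρ) (U : Ultrafilter ρ) (A B : MFormula ρ) :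
      R ∉ U → MDeriv ((R, B) ::ₘ Γ) → MDeriv ((R, MFormula.conj U A B) ::ₘ Γ)
  | conj_pos (Γ : MSeq ρ) (R : Set ρ) (U : Ultrafilter ρ) (A B : MFormula ρ) :
      R ∈ U → MDeriv ((R, A) ::ₘ Γ) → MDeriv ((R, B) ::ₘ Γ) →
      MDeriv ((R, MFormula.conj U A B) ::ₘ Γ)

namespace MRLcut

/-- notation for the atom block of an `id` rule -/
def atomsOf {ρ : Type} (L : List (Set ρ)) (a : ℕ) : MSeq ρ :=
  ↑(L.map fun R => ((R, MFormula.atom a) : Set ρ × MFormula ρ))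

/-- Height-indexed derivability. -/
inductive MDerivH {ρ : Type} : ℕ → MSeq ρ → Prop where
  | id (h : ℕ) (Γ : MSeq ρ) (a : ℕ) (L : List (Set ρ)) :
      L.Pairwise Disjoint → (⋃ R ∈ L, R) = Set.univ →
      MDerivH h (Γ + atomsOf L a)
  | contract (h : ℕ) (Γ : MSeq ρ) (R : Set ρ) (A : MFormula ρ) :
      MDerivH h ((R, A) ::ₘ (R, A) ::ₘ Γ) → MDerivH (h+1) ((R, A) ::ₘ Γ)
  | neg (h : ℕ) (Γ : MSeq ρ) (R : Set ρ) (f : ρ → ρ) (A : MFormula ρ) :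
      MDerivH h ((f ⁻¹' R, A) ::ₘ Γ) → MDerivH (h+1) ((R, MFormula.neg f A) ::ₘ Γ)
  | conj_neg_l (h : ℕ) (Γ : MSeq ρ) (R : Set ρ) (U : Ultrafilter ρ) (A B : MFormula ρ) :
      R ∉ U → MDerivH h ((R, A) ::ₘ Γ) → MDerivH (h+1) ((R, MFormula.conj U A B) ::ₘ Γ)
  | conj_neg_r (h : ℕ) (Γ : MSeq ρ) (R : Set ρ) (U : Ultrafilter ρ) (A B : MFormula ρ) :
      R ∉ U → MDerivH h ((R, B) ::ₘ Γ) → MDerivH (h+1) ((R, MFormula.conj U A B) ::ₘ Γ)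
  | conj_pos (h : ℕ) (Γ : MSeq ρ) (R : Set ρ) (U : Ultrafilter ρ) (A B : MFormula ρ) :
      R ∈ U → MDerivH h ((R, A) ::ₘ Γ) → MDerivH h ((R, B) ::ₘ Γ) →
      MDerivH (h+1) ((R, MFormula.conj U A B) ::ₘ Γ)

variable {ρ : Type}

theorem MDerivH.mono : ∀ {h : ℕ} {Γ : MSeq ρ}, MDerivH h Γ → ∀ {h'}, h ≤ h' → MDerivH h' Γ := by
  intro h Γ d
  induction d with
  | id h Γ a L hp hc => intro h' _; exact .id h' Γ a L hp hc
  | contract h Γ R A d ih =>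
      intro h' hle
      obtain ⟨m, rfl⟩ := Nat.exists_eq_add_of_le hle
      have := MDerivH.contract (h+m) Γ R A (ih (Nat.le_add_right _ _))
      simpa [Nat.add_right_comm] using this
  | neg h Γ R f A d ih =>
      intro h' hle
      obtain ⟨m, rfl⟩ := Nat.exists_eq_add_of_le hle
      have := MDerivH.neg (h+m) Γ R f A (ih (Nat.le_add_right _ _))
      simpa [Nat.add_right_comm] using this
  | conj_neg_l h Γ R U A B hU d ih =>
      intro h' hle
      obtain ⟨m, rfl⟩ := Nat.exists_eq_add_of_le hle
      have := MDerivH.conj_neg_l (h+m) Γ R U A B hU (ih (Nat.le_add_right _ _))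
      simpa [Nat.add_right_comm] using this
  | conj_neg_r h Γ R U A B hU d ih =>
      intro h' hle
      obtain ⟨m, rfl⟩ := Nat.exists_eq_add_of_le hle
      have := MDerivH.conj_neg_r (h+m) Γ R U A B hU (ih (Nat.le_add_right _ _))
      simpa [Nat.add_right_comm] using this
  | conj_pos h Γ R U A B hU d1 d2 ih1 ih2 =>
      intro h' hle
      obtain ⟨m, rfl⟩ := Nat.exists_eq_add_of_le hle
      have := MDerivH.conj_pos (h+m) Γ R U A B hU (ih1 (Nat.le_add_right _ _)) (ih2 (Nat.le_add_right _ _))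
      simpa [Nat.add_right_comm] using this

theorem MDeriv.toH {Γ : MSeq ρ} (d : MDeriv Γ) : ∃ h, MDerivH h Γ := by
  induction d with
  | id Γ a L hp hc => exact ⟨0, .id 0 Γ a L hp hc⟩
  | contract Γ R A d ih => obtain ⟨h, dh⟩ := ih; exact ⟨h+1, .contract h Γ R A dh⟩
  | neg Γ R f A d ih => obtain ⟨h, dh⟩ := ih; exact ⟨h+1, .neg h Γ R f A dh⟩
  | conj_neg_l Γ R U A B hU d ih => obtain ⟨h, dh⟩ := ih; exact ⟨h+1, .conj_neg_l h Γ R U A B hU dh⟩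
  | conj_neg_r Γ R U A B hU d ih => obtain ⟨h, dh⟩ := ih; exact ⟨h+1, .conj_neg_r h Γ R U A B hU dh⟩
  | conj_pos Γ R U A B hU d1 d2 ih1 ih2 =>
      obtain ⟨h1, dh1⟩ := ih1; obtain ⟨h2, dh2⟩ := ih2
      exact ⟨max h1 h2 + 1, .conj_pos _ Γ R U A B hU (dh1.mono (le_max_left _ _))
        (dh2.mono (le_max_right _ _))⟩

theorem MDerivH.toDeriv : ∀ {h : ℕ} {Γ : MSeq ρ}, MDerivH h Γ → MDeriv Γ := by
  intro h Γ d
  induction d with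
  | id h Γ a L hp hc => exact .id Γ a L hp hc
  | contract h Γ R A d ih => exact .contract Γ R A ih
  | neg h Γ R f A d ih => exact .neg Γ R f A ih
  | conj_neg_l h Γ R U A B hU d ih => exact .conj_neg_l Γ R U A B hU ih
  | conj_neg_r h Γ R U A B hU d ih => exact .conj_neg_r Γ R U A B hU ih
  | conj_pos h Γ R U A B hU d1 d2 ih1 ih2 => exact .conj_pos Γ R U A B hU ih1 ih2

/-- Weakening is admissible. -/
theorem MDeriv.weaken : ∀ {Γ : MSeq ρ}, MDeriv Γ → ∀ (Δ : MSeq ρ), MDeriv (Δ + Γ) := by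
  intro Γ d
  induction d with
  | id Γ a L hp hc => intro Δ; rw [← add_assoc]; exact .id (Δ + Γ) a L hp hc
  | contract Γ R A d ih =>
      intro Δ
      have := ih Δ
      rw [show Δ + ((R,A) ::ₘ (R,A) ::ₘ Γ) = (R,A) ::ₘ (R,A) ::ₘ (Δ + Γ) by
        simp [Multiset.add_cons]] at this
      have := MDeriv.contract _ _ _ this
      rw [show Δ + ((R,A) ::ₘ Γ) = (R,A) ::ₘ (Δ + Γ) by simp [Multiset.add_cons]]
      exact this
  | neg Γ R f A d ih =>
      intro Δ
      have := ih Δ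
      rw [show Δ + ((f ⁻¹' R, A) ::ₘ Γ) = (f ⁻¹' R, A) ::ₘ (Δ + Γ) by simp [Multiset.add_cons]] at this
      have := MDeriv.neg _ R f A this
      rw [show Δ + ((R, MFormula.neg f A) ::ₘ Γ) = (R, MFormula.neg f A) ::ₘ (Δ + Γ) by simp [Multiset.add_cons]]
      exact this
  | conj_neg_l Γ R U A B hU d ih =>
      intro Δ
      have := ih Δ
      rw [show Δ + ((R, A) ::ₘ Γ) = (R, A) ::ₘ (Δ + Γ) by simp [Multiset.add_cons]] at this
      have := MDeriv.conj_neg_l _ R U A B hU this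
      rw [show Δ + ((R, MFormula.conj U A B) ::ₘ Γ) = (R, MFormula.conj U A B) ::ₘ (Δ + Γ) by simp [Multiset.add_cons]]
      exact this
  | conj_neg_r Γ R U A B hU d ih =>
      intro Δ
      have := ih Δ
      rw [show Δ + ((R, B) ::ₘ Γ) = (R, B) ::ₘ (Δ + Γ) by simp [Multiset.add_cons]] at this
      have := MDeriv.conj_neg_r _ R U A B hU this
      rw [show Δ + ((R, MFormula.conj U A B) ::ₘ Γ) = (R, MFormula.conj U A B) ::ₘ (Δ + Γ) by simp [Multiset.add_cons]]
      exact this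
  | conj_pos Γ R U A B hU d1 d2 ih1 ih2 =>
      intro Δ
      have h1 := ih1 Δ; have h2 := ih2 Δ
      rw [show Δ + ((R, A) ::ₘ Γ) = (R, A) ::ₘ (Δ + Γ) by simp [Multiset.add_cons]] at h1
      rw [show Δ + ((R, B) ::ₘ Γ) = (R, B) ::ₘ (Δ + Γ) by simp [Multiset.add_cons]] at h2
      have := MDeriv.conj_pos _ R U A B hU h1 h2
      rw [show Δ + ((R, MFormula.conj U A B) ::ₘ Γ) = (R, MFormula.conj U A B) ::ₘ (Δ + Γ) by simp [Multiset.add_cons]]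
      exact this

/-- Contraction of a whole multiset. -/
theorem MDeriv.contract_block : ∀ (Δ : MSeq ρ) {Γ : MSeq ρ}, MDeriv (Δ + Δ + Γ) → MDeriv (Δ + Γ) := by
  intro Δ
  induction Δ using Multiset.induction with
  | empty => intro Γ h; simpa using h
  | cons c Δ ih =>
      intro Γ h
      obtain ⟨R, A⟩ := c
      have h' : MDeriv ((R,A) ::ₘ (R,A) ::ₘ (Δ + Δ + Γ)) := by
        rw [show (R,A) ::ₘ (R,A) ::ₘ (Δ + Δ + Γ) = ((R,A) ::ₘ Δ) + ((R,A) ::ₘ Δ) + Γ by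
          simp [Multiset.cons_add, Multiset.add_cons]]
        exact h
      have := MDeriv.contract _ R A h'
      have : MDeriv ((R,A) ::ₘ (Δ + Γ)) := by
        have h2 : MDeriv (Δ + ((R,A) ::ₘ Γ)) := by
          have := ih (Γ := (R,A) ::ₘ Γ) ?_
          · exact this
          · rw [show Δ + Δ + ((R,A) ::ₘ Γ) = (R,A) ::ₘ (Δ + Δ + Γ) by simp [Multiset.add_cons]]
            exact this
        rw [show (R,A) ::ₘ (Δ + Γ) = Δ + ((R,A) ::ₘ Γ) by simp [Multiset.add_cons]]
        exact h2
      rwa [show ((R,A) ::ₘ Δ) + Γ = (R,A) ::ₘ (Δ + Γ) by simp [Multiset.cons_add]]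

theorem MDeriv.of_nsmul {Γ : MSeq ρ} : ∀ (k : ℕ), MDeriv ((k+1) • Γ) → MDeriv Γ := by
  intro k
  induction k with
  | zero => simpa using id
  | succ m ih =>
      intro h
      apply ih
      have h2 : MDeriv (Γ + Γ + m • Γ) := by
        rw [show Γ + Γ + m • Γ = (m+1+1) • Γ by rw [succ_nsmul, succ_nsmul]; abel]
        exact h
      have h3 := MDeriv.contract_block Γ h2
      rw [succ_nsmul, add_comm]
      exact h3

/-! ### Multiset helpers -/

theorem nsmul_succ_cons {α : Type*} (Γ : Multiset α) (c : α) (m : ℕ) :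
    Γ + (m+1) • ({c} : Multiset α) = c ::ₘ (Γ + m • ({c} : Multiset α)) := by
  rw [succ_nsmul, ← add_assoc, add_comm (Γ + m • ({c} : Multiset α)) ({c} : Multiset α),
    Multiset.singleton_add]

theorem cons_eq_add_nsmul {α : Type*} {a c : α} {s t : Multiset α} {m : ℕ}
    (h : a ::ₘ s = t + (m+1) • ({c} : Multiset α)) :
    (a = c ∧ s = t + m • ({c} : Multiset α)) ∨
    (∃ t', t = a ::ₘ t' ∧ s = t' + (m+1) • ({c} : Multiset α)) := by
  classical
  have hmem : a ∈ t + (m+1) • ({c} : Multiset α) := by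
    rw [← h]; exact Multiset.mem_cons_self a s
  rcases Multiset.mem_add.1 hmem with ht | hc
  · right
    refine ⟨t.erase a, (Multiset.cons_erase ht).symm, ?_⟩
    have : a ::ₘ s = a ::ₘ (t.erase a + (m+1) • ({c} : Multiset α)) := by
      rw [h, ← Multiset.cons_add, Multiset.cons_erase ht]
    exact (Multiset.cons_inj_right a).1 this
  · left
    have hac : a = c := by
      have := Multiset.mem_nsmul.1 hc
      simpa using this.2
    subst hac
    refine ⟨rfl, ?_⟩
    have : a ::ₘ s = a ::ₘ (t + m • ({a} : Multiset α)) := by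
      rw [h, nsmul_succ_cons]
    exact (Multiset.cons_inj_right a).1 this

theorem eq_sub_of_notmem {α : Type*} {c : α} {M : Multiset α} (hc : c ∉ M) :
    ∀ (k : ℕ) {Γ Δ : Multiset α}, Γ + k • ({c} : Multiset α) = Δ + M →
      ∃ Δ', Δ = Δ' + k • ({c} : Multiset α) ∧ Γ = Δ' + M := by
  intro k
  induction k with
  | zero => intro Γ Δ h; exact ⟨Δ, by simp, by simpa using h⟩
  | succ m ih =>
      intro Γ Δ h
      have hcm : c ∈ Δ + M := by
        rw [← h, nsmul_succ_cons]; exact Multiset.mem_cons_self c _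
      have hcΔ : c ∈ Δ := (Multiset.mem_add.1 hcm).resolve_right hc
      classical
      have hdec : Δ = c ::ₘ Δ.erase c := (Multiset.cons_erase hcΔ).symm
      have h' : Γ + m • ({c} : Multiset α) = Δ.erase c + M := by
        have : c ::ₘ (Γ + m • ({c} : Multiset α)) = c ::ₘ (Δ.erase c + M) := by
          rw [← nsmul_succ_cons, h, ← Multiset.cons_add, Multiset.cons_erase hcΔ]
        exact (Multiset.cons_inj_right c).1 this
      obtain ⟨Δ', hΔ', hΓ⟩ := ih h'
      exact ⟨Δ', by rw [hdec, hΔ', ← nsmul_succ_cons], hΓ⟩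

theorem le_of_le_add_nsmul {α : Type*} {s t : Multiset α} {c : α} {k : ℕ}
    (h : s ≤ t + k • ({c} : Multiset α)) (hc : c ∉ s) : s ≤ t := by
  classical
  rw [Multiset.le_iff_count] at h ⊢
  intro a
  have := h a
  rcases eq_or_ne a c with rfl | hne
  · simpa [Multiset.count_eq_zero_of_notMem hc] using Nat.zero_le _
  · simpa [Multiset.count_nsmul, Multiset.count_singleton, hne] using this

theorem MDeriv.id' (Γ : MSeq ρ) (a : ℕ) (L : List (Set ρ))
    (hp : L.Pairwise Disjoint) (hc : (⋃ R ∈ L, R) = Set.univ) :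
    MDeriv (Γ + atomsOf L a) := MDeriv.id Γ a L hp hc

theorem mem_atomsOf {L : List (Set ρ)} {a : ℕ} {x : Set ρ × MFormula ρ} :
    x ∈ atomsOf L a ↔ ∃ S ∈ L, x = (S, MFormula.atom a) := by
  simp [atomsOf, eq_comm]

theorem atomsOf_filter_le (L : List (Set ρ)) (a : ℕ) (p : Set ρ → Prop) [DecidablePred p] :
    atomsOf (L.filter fun S => p S) a ≤ atomsOf L a := by
  apply Multiset.coe_le.2
  exact ((List.filter_sublist (l := L)).map _).subperm

attribute [local instance] Classical.propDecidable

/-- Classification of the last rule of a derivation of `Γ + (m+1) • {(R,A)}`. -/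
inductive Cls (A : MFormula ρ) (R : Set ρ) (Γ : MSeq ρ) (h m : ℕ) : Prop where
  | done : MDeriv Γ → Cls A R Γ h m
  | more (h' : ℕ) : h' < h → MDerivH h' (Γ + (m+2) • ({(R, A)} : MSeq ρ)) → Cls A R Γ h m
  | commute1 (Γ' : MSeq ρ) (h' : ℕ) : h' < h → MDerivH h' (Γ' + (m+1) • ({(R, A)} : MSeq ρ)) →
      (∀ Δ, MDeriv (Γ' + Δ) → MDeriv (Γ + Δ)) → Cls A R Γ h m
  | commute2 (Γ₁ Γ₂ : MSeq ρ) (h' : ℕ) : h' < h →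
      MDerivH h' (Γ₁ + (m+1) • ({(R, A)} : MSeq ρ)) →
      MDerivH h' (Γ₂ + (m+1) • ({(R, A)} : MSeq ρ)) →
      (∀ Δ, MDeriv (Γ₁ + Δ) → MDeriv (Γ₂ + Δ) → MDeriv (Γ + Δ)) → Cls A R Γ h m
  | patom (a : ℕ) (L : List (Set ρ)) : A = MFormula.atom a → L.Pairwise Disjoint →
      (⋃ S ∈ L, S) = Set.univ → R ∈ L →
      atomsOf (L.filter fun S => S ≠ R) a ≤ Γ → Cls A R Γ h m
  | pneg (f : ρ → ρ) (B : MFormula ρ) (h' : ℕ) : A = MFormula.neg f B → h' < h →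
      MDerivH h' ((f ⁻¹' R, B) ::ₘ (Γ + m • ({(R, A)} : MSeq ρ))) → Cls A R Γ h m
  | pconjL (U : Ultrafilter ρ) (B C : MFormula ρ) (h' : ℕ) : A = MFormula.conj U B C → R ∉ U →
      h' < h → MDerivH h' ((R, B) ::ₘ (Γ + m • ({(R, A)} : MSeq ρ))) → Cls A R Γ h m
  | pconjR (U : Ultrafilter ρ) (B C : MFormula ρ) (h' : ℕ) : A = MFormula.conj U B C → R ∉ U →
      h' < h → MDerivH h' ((R, C) ::ₘ (Γ + m • ({(R, A)} : MSeq ρ))) → Cls A R Γ h m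
  | pconjP (U : Ultrafilter ρ) (B C : MFormula ρ) (h' : ℕ) : A = MFormula.conj U B C → R ∈ U →
      h' < h → MDerivH h' ((R, B) ::ₘ (Γ + m • ({(R, A)} : MSeq ρ))) →
      MDerivH h' ((R, C) ::ₘ (Γ + m • ({(R, A)} : MSeq ρ))) → Cls A R Γ h m

theorem classify {h m : ℕ} {R : Set ρ} {A : MFormula ρ} {Γ E : MSeq ρ}
    (d : MDerivH h E) (hE : E = Γ + (m+1) • ({(R, A)} : MSeq ρ)) : Cls A R Γ h m := by
  classical
  cases d with
  | id h Δ a L hp hc =>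
      by_cases hmem : ((R, A) : Set ρ × MFormula ρ) ∈ atomsOf L a
      · obtain ⟨S, hS, hSx⟩ := mem_atomsOf.1 hmem
        injection hSx with h1 h2
        subst h1; subst h2
        refine Cls.patom a L rfl hp hc hS ?_
        have h1 : atomsOf (L.filter fun S' => S' ≠ R) a ≤ Δ + atomsOf L a :=
          le_trans (atomsOf_filter_le L a _) (self_le_add_left _ _)
        rw [hE] at h1
        refine le_of_le_add_nsmul h1 ?_
        intro hmem'
        obtain ⟨S', hS', hx⟩ := mem_atomsOf.1 hmem'
        injection hx with hx1 _
        have : S' ≠ R := by simpa using (List.mem_filter.1 hS').2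
        exact this hx1.symm
      · obtain ⟨Δ', _, hΓ⟩ := eq_sub_of_notmem hmem (m+1) hE.symm
        exact Cls.done (hΓ ▸ MDeriv.id' Δ' a L hp hc)
  | contract h' Δ S B d' =>
      rcases cons_eq_add_nsmul hE with ⟨heq, hΔ⟩ | ⟨Γ', hΓ, hΔ⟩
      · injection heq with h1 h2; subst h1; subst h2
        refine Cls.more h' (Nat.lt_succ_self _) ?_
        rw [show (m+2) = (m+1)+1 from rfl, nsmul_succ_cons, nsmul_succ_cons, ← hΔ]
        exact d'
      · refine Cls.commute1 ((S, B) ::ₘ (S, B) ::ₘ Γ') h' (Nat.lt_succ_self _) ?_ ?_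
        · rw [Multiset.cons_add, Multiset.cons_add, ← hΔ]; exact d'
        · intro Δ₀ hD
          rw [Multiset.cons_add, Multiset.cons_add] at hD
          rw [hΓ, Multiset.cons_add]
          exact MDeriv.contract _ S B hD
  | neg h' Δ S g B d' =>
      rcases cons_eq_add_nsmul hE with ⟨heq, hΔ⟩ | ⟨Γ', hΓ, hΔ⟩
      · injection heq with h1 h2; subst h1; subst h2
        exact Cls.pneg g B h' rfl (Nat.lt_succ_self _) (by rw [← hΔ]; exact d')
      · refine Cls.commute1 ((g ⁻¹' S, B) ::ₘ Γ') h' (Nat.lt_succ_self _) ?_ ?_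
        · rw [Multiset.cons_add, ← hΔ]; exact d'
        · intro Δ₀ hD
          rw [Multiset.cons_add] at hD
          rw [hΓ, Multiset.cons_add]
          exact MDeriv.neg _ S g B hD
  | conj_neg_l h' Δ S U B C hU d' =>
      rcases cons_eq_add_nsmul hE with ⟨heq, hΔ⟩ | ⟨Γ', hΓ, hΔ⟩
      · injection heq with h1 h2; subst h1; subst h2
        exact Cls.pconjL U B C h' rfl hU (Nat.lt_succ_self _) (by rw [← hΔ]; exact d')
      · refine Cls.commute1 ((S, B) ::ₘ Γ') h' (Nat.lt_succ_self _) ?_ ?_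
        · rw [Multiset.cons_add, ← hΔ]; exact d'
        · intro Δ₀ hD
          rw [Multiset.cons_add] at hD
          rw [hΓ, Multiset.cons_add]
          exact MDeriv.conj_neg_l _ S U B C hU hD
  | conj_neg_r h' Δ S U B C hU d' =>
      rcases cons_eq_add_nsmul hE with ⟨heq, hΔ⟩ | ⟨Γ', hΓ, hΔ⟩
      · injection heq with h1 h2; subst h1; subst h2
        exact Cls.pconjR U B C h' rfl hU (Nat.lt_succ_self _) (by rw [← hΔ]; exact d')
      · refine Cls.commute1 ((S, C) ::ₘ Γ') h' (Nat.lt_succ_self _) ?_ ?_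
        · rw [Multiset.cons_add, ← hΔ]; exact d'
        · intro Δ₀ hD
          rw [Multiset.cons_add] at hD
          rw [hΓ, Multiset.cons_add]
          exact MDeriv.conj_neg_r _ S U B C hU hD
  | conj_pos h' Δ S U B C hU d1 d2 =>
      rcases cons_eq_add_nsmul hE with ⟨heq, hΔ⟩ | ⟨Γ', hΓ, hΔ⟩
      · injection heq with h1 h2; subst h1; subst h2
        exact Cls.pconjP U B C h' rfl hU (Nat.lt_succ_self _)
          (by rw [← hΔ]; exact d1) (by rw [← hΔ]; exact d2)
      · refine Cls.commute2 ((S, B) ::ₘ Γ') ((S, C) ::ₘ Γ') h' (Nat.lt_succ_self _) ?_ ?_ ?_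
        · rw [Multiset.cons_add, ← hΔ]; exact d1
        · rw [Multiset.cons_add, ← hΔ]; exact d2
        · intro Δ₀ hD1 hD2
          rw [Multiset.cons_add] at hD1 hD2
          rw [hΓ, Multiset.cons_add]
          exact MDeriv.conj_pos _ S U B C hU hD1 hD2

/-- "Reducible" outcomes of classification. -/
def Red (A : MFormula ρ) (R : Set ρ) (Γ : MSeq ρ) (h m : ℕ) : Prop :=
  MDeriv Γ ∨
  (∃ h' < h, MDerivH h' (Γ + (m+2) • ({(R, A)} : MSeq ρ))) ∨
  (∃ Γ' h', h' < h ∧ MDerivH h' (Γ' + (m+1) • ({(R, A)} : MSeq ρ)) ∧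
    ∀ Δ, MDeriv (Γ' + Δ) → MDeriv (Γ + Δ)) ∨
  (∃ Γ₁ Γ₂ h', h' < h ∧ MDerivH h' (Γ₁ + (m+1) • ({(R, A)} : MSeq ρ)) ∧
    MDerivH h' (Γ₂ + (m+1) • ({(R, A)} : MSeq ρ)) ∧
    ∀ Δ, MDeriv (Γ₁ + Δ) → MDeriv (Γ₂ + Δ) → MDeriv (Γ + Δ))

/-- "Principal" outcomes of classification. -/
inductive Prin (A : MFormula ρ) (R : Set ρ) (Γ : MSeq ρ) (h m : ℕ) : Prop where
  | patom (a : ℕ) (L : List (Set ρ)) : A = MFormula.atom a → L.Pairwise Disjoint →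
      (⋃ S ∈ L, S) = Set.univ → R ∈ L →
      atomsOf (L.filter fun S => S ≠ R) a ≤ Γ → Prin A R Γ h m
  | pneg (f : ρ → ρ) (B : MFormula ρ) (h' : ℕ) : A = MFormula.neg f B → h' < h →
      MDerivH h' ((f ⁻¹' R, B) ::ₘ (Γ + m • ({(R, A)} : MSeq ρ))) → Prin A R Γ h m
  | pconjL (U : Ultrafilter ρ) (B C : MFormula ρ) (h' : ℕ) : A = MFormula.conj U B C → R ∉ U →
      h' < h → MDerivH h' ((R, B) ::ₘ (Γ + m • ({(R, A)} : MSeq ρ))) → Prin A R Γ h m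
  | pconjR (U : Ultrafilter ρ) (B C : MFormula ρ) (h' : ℕ) : A = MFormula.conj U B C → R ∉ U →
      h' < h → MDerivH h' ((R, C) ::ₘ (Γ + m • ({(R, A)} : MSeq ρ))) → Prin A R Γ h m
  | pconjP (U : Ultrafilter ρ) (B C : MFormula ρ) (h' : ℕ) : A = MFormula.conj U B C → R ∈ U →
      h' < h → MDerivH h' ((R, B) ::ₘ (Γ + m • ({(R, A)} : MSeq ρ))) →
      MDerivH h' ((R, C) ::ₘ (Γ + m • ({(R, A)} : MSeq ρ))) → Prin A R Γ h m

theorem cls_resolve {A : MFormula ρ} {R : Set ρ} {Γ : MSeq ρ} {h m : ℕ}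
    (c : Cls A R Γ h m) : Red A R Γ h m ∨ Prin A R Γ h m := by
  cases c with
  | done d => exact Or.inl (Or.inl d)
  | more h' hlt d => exact Or.inl (Or.inr (Or.inl ⟨h', hlt, d⟩))
  | commute1 Γ' h' hlt d fn => exact Or.inl (Or.inr (Or.inr (Or.inl ⟨Γ', h', hlt, d, fn⟩)))
  | commute2 Γ₁ Γ₂ h' hlt d1 d2 fn =>
      exact Or.inl (Or.inr (Or.inr (Or.inr ⟨Γ₁, Γ₂, h', hlt, d1, d2, fn⟩)))
  | patom a L hA hp hc hR hle => exact Or.inr (.patom a L hA hp hc hR hle)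
  | pneg f B h' hA hlt d => exact Or.inr (.pneg f B h' hA hlt d)
  | pconjL U B C h' hA hU hlt d => exact Or.inr (.pconjL U B C h' hA hU hlt d)
  | pconjR U B C h' hA hU hlt d => exact Or.inr (.pconjR U B C h' hA hU hlt d)
  | pconjP U B C h' hA hU hlt d1 d2 => exact Or.inr (.pconjP U B C h' hA hU hlt d1 d2)

theorem atomsOf_append (l1 l2 : List (Set ρ)) (a : ℕ) :
    atomsOf (l1 ++ l2) a = atomsOf l1 a + atomsOf l2 a := by
  simp [atomsOf]

theorem atomsOf_flatten (ls : List (List (Set ρ))) (a : ℕ) :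
    atomsOf ls.flatten a = (ls.map fun l => atomsOf l a).sum := by
  induction ls with
  | nil => simp [atomsOf]
  | cons l ls ih => simp [List.flatten_cons, atomsOf_append, ih]

theorem sum_eq_add_erase {n : ℕ} (Γs : Fin n → MSeq ρ) (i : Fin n) :
    Finset.univ.sum Γs = Γs i + (Finset.univ.erase i).sum Γs :=
  (Finset.add_sum_erase _ _ (Finset.mem_univ i)).symm

theorem sum_update_eq {n : ℕ} (Γs : Fin n → MSeq ρ) (i : Fin n) (X : MSeq ρ) :
    Finset.univ.sum (Function.update Γs i X) = X + (Finset.univ.erase i).sum Γs := by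
  rw [Finset.sum_update_of_mem (Finset.mem_univ i), Finset.sdiff_singleton_eq_erase]

theorem sum_update_eq' {n : ℕ} (hs : Fin n → ℕ) (i : Fin n) (X : ℕ) :
    (Finset.univ.sum (Function.update hs i X)) = X + (Finset.univ.erase i).sum hs := by
  rw [Finset.sum_update_of_mem (Finset.mem_univ i), Finset.sdiff_singleton_eq_erase]

/-- The generic outer loop of the multicut elimination: handles all
non-principal cases, delegating principal configurations to `HP`. -/
theorem loop (A : MFormula ρ) {n : ℕ} (Rs : Fin n → Set ρ)
    (hdisj : ∀ i j, i ≠ j → Disjoint (Rs i)ᶜ (Rs j)ᶜ)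
    (hcover : (⋃ i, (Rs i)ᶜ) = Set.univ)
    (HP : ∀ (Γs : Fin n → MSeq ρ) (ms hs : Fin n → ℕ),
      0 < n →
      (∀ (Γs' : Fin n → MSeq ρ) (ms' hs' : Fin n → ℕ),
        Finset.univ.sum hs' < Finset.univ.sum hs →
        (∀ i, MDerivH (hs' i) (Γs' i + (ms' i + 1) • ({(Rs i, A)} : MSeq ρ))) →
        MDeriv (Finset.univ.sum Γs')) →
      (∀ i, MDerivH (hs i) (Γs i + (ms i + 1) • ({(Rs i, A)} : MSeq ρ))) →
      (∀ i, Prin A (Rs i) (Γs i) (hs i) (ms i)) →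
      MDeriv (Finset.univ.sum Γs)) :
    ∀ (Γs : Fin n → MSeq ρ),
      (∀ i, MDeriv ((Rs i, A) ::ₘ Γs i)) → MDeriv (Finset.univ.sum Γs) := by
  intro Γs0 hder
  choose hs0 hd0 using fun i => MDeriv.toH (hder i)
  have hd0' : ∀ i, MDerivH (hs0 i) (Γs0 i + (0 + 1) • ({(Rs i, A)} : MSeq ρ)) := by
    intro i
    rw [nsmul_succ_cons]
    simpa using hd0 i
  suffices H : ∀ (N : ℕ) (Γs : Fin n → MSeq ρ) (ms hs : Fin n → ℕ),
      Finset.univ.sum hs ≤ N →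
      (∀ i, MDerivH (hs i) (Γs i + (ms i + 1) • ({(Rs i, A)} : MSeq ρ))) →
      MDeriv (Finset.univ.sum Γs) by
    exact H (Finset.univ.sum hs0) Γs0 (fun _ => 0) hs0 le_rfl hd0'
  intro N
  induction N using Nat.strong_induction_on with
  | _ N IH =>
  intro Γs ms hs hsum hd
  rcases Nat.eq_zero_or_pos n with hn0 | hn
  · subst hn0
    have huniv : (Set.univ : Set ρ) = ∅ := by rw [← hcover]; simp
    have hder0 : MDeriv ((0 : MSeq ρ) + atomsOf ([] : List (Set ρ)) 0) :=
      MDeriv.id' 0 0 [] (by simp) (by simpa using huniv.symm)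
    simpa [atomsOf] using hder0
  · by_cases hex : ∃ i, Red A (Rs i) (Γs i) (hs i) (ms i)
    · obtain ⟨i, hred⟩ := hex
      have hsumi : hs i + (Finset.univ.erase i).sum hs = Finset.univ.sum hs :=
        Finset.add_sum_erase _ _ (Finset.mem_univ i)
      rcases hred with hdone | ⟨h', hlt, d'⟩ | ⟨Γ', h', hlt, d', fn⟩ | ⟨Γ₁, Γ₂, h', hlt, d1, d2, fn⟩
      · rw [sum_eq_add_erase Γs i, add_comm]
        exact MDeriv.weaken hdone _
      · refine IH (Finset.univ.sum (Function.update hs i h')) ?_ Γs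
          (Function.update ms i (ms i + 1)) (Function.update hs i h') le_rfl ?_
        · rw [sum_update_eq']; omega
        · intro j
          rcases eq_or_ne j i with rfl | hne
          · simpa using d'
          · simpa [Function.update_of_ne hne] using hd j
      · have hres := IH (Finset.univ.sum (Function.update hs i h')) (by rw [sum_update_eq']; omega)
          (Function.update Γs i Γ') ms (Function.update hs i h') le_rfl ?_
        · rw [sum_update_eq] at hres
          rw [sum_eq_add_erase Γs i]
          exact fn _ hres
        · intro j
          rcases eq_or_ne j i with rfl | hne
          · simpa using d'
          · simpa [Function.update_of_ne hne] using hd j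
      · have prem1 : ∀ j, MDerivH (Function.update hs i h' j)
            (Function.update Γs i Γ₁ j + (ms j + 1) • ({(Rs j, A)} : MSeq ρ)) := by
          intro j
          rcases eq_or_ne j i with rfl | hne
          · simpa using d1
          · simpa [Function.update_of_ne hne] using hd j
        have prem2 : ∀ j, MDerivH (Function.update hs i h' j)
            (Function.update Γs i Γ₂ j + (ms j + 1) • ({(Rs j, A)} : MSeq ρ)) := by
          intro j
          rcases eq_or_ne j i with rfl | hne
          · simpa using d2
          · simpa [Function.update_of_ne hne] using hd j
        have hres1 := IH (Finset.univ.sum (Function.update hs i h')) (by rw [sum_update_eq']; omega)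
          (Function.update Γs i Γ₁) ms (Function.update hs i h') le_rfl prem1
        have hres2 := IH (Finset.univ.sum (Function.update hs i h')) (by rw [sum_update_eq']; omega)
          (Function.update Γs i Γ₂) ms (Function.update hs i h') le_rfl prem2
        rw [sum_update_eq] at hres1 hres2
        rw [sum_eq_add_erase Γs i]
        exact fn _ hres1 hres2
    · have hprin : ∀ i, Prin A (Rs i) (Γs i) (hs i) (ms i) := fun i =>
        (cls_resolve (classify (hd i) rfl)).resolve_left (fun hr => hex ⟨i, hr⟩)
      exact HP Γs ms hs hn
        (fun Γs' ms' hs' hlt hd'' => IH (Finset.univ.sum hs') (lt_of_lt_of_le hlt hsum)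
          Γs' ms' hs' le_rfl hd'') hd hprin

theorem buildF {A : MFormula ρ} {n : ℕ} {Rs : Fin n → Set ρ} {Γs : Fin n → MSeq ρ}
    {ms hs : Fin n → ℕ}
    (CUT : ∀ (Γs' : Fin n → MSeq ρ) (ms' hs' : Fin n → ℕ),
        Finset.univ.sum hs' < Finset.univ.sum hs →
        (∀ i, MDerivH (hs' i) (Γs' i + (ms' i + 1) • ({(Rs i, A)} : MSeq ρ))) →
        MDeriv (Finset.univ.sum Γs'))
    (hd : ∀ i, MDerivH (hs i) (Γs i + (ms i + 1) • ({(Rs i, A)} : MSeq ρ)))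
    (i : Fin n) (T : Set ρ × MFormula ρ) {h' : ℕ} (hlt : h' < hs i)
    (d : MDerivH h' (T ::ₘ (Γs i + ms i • ({(Rs i, A)} : MSeq ρ)))) :
    MDeriv (T ::ₘ Finset.univ.sum Γs) := by
  have hsumi : hs i + (Finset.univ.erase i).sum hs = Finset.univ.sum hs :=
    Finset.add_sum_erase _ _ (Finset.mem_univ i)
  rw [sum_eq_add_erase Γs i, ← Multiset.cons_add]
  cases hm : ms i with
  | zero =>
      rw [hm] at d
      simp only [zero_nsmul, add_zero] at d
      rw [add_comm]
      exact MDeriv.weaken (MDerivH.toDeriv d) _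
  | succ m' =>
      rw [hm] at d
      have hres := CUT (Function.update Γs i (T ::ₘ Γs i)) (Function.update ms i m')
        (Function.update hs i h') (by rw [sum_update_eq']; omega) ?_
      · rw [sum_update_eq] at hres
        exact hres
      · intro j
        rcases eq_or_ne j i with rfl | hne
        · simp only [Function.update_self]
          rw [Multiset.cons_add]
          exact d
        · simpa [Function.update_of_ne hne] using hd j

theorem handler_atom {a : ℕ} {n : ℕ} {Rs : Fin n → Set ρ}
    (hdisj : ∀ i j, i ≠ j → Disjoint (Rs i)ᶜ (Rs j)ᶜ)
    (hcover : (⋃ i, (Rs i)ᶜ) = Set.univ)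
    (Γs : Fin n → MSeq ρ) (ms hs : Fin n → ℕ)
    (hprin : ∀ i, Prin (MFormula.atom a) (Rs i) (Γs i) (hs i) (ms i)) :
    MDeriv (Finset.univ.sum Γs) := by
  classical
  have hdata : ∀ i, ∃ L : List (Set ρ), L.Pairwise Disjoint ∧ (⋃ S ∈ L, S) = Set.univ ∧
      Rs i ∈ L ∧ atomsOf (L.filter fun S => S ≠ Rs i) a ≤ Γs i := by
    intro i
    rcases hprin i with ⟨a', L, heq, hp, hc, hR, hle⟩ | ⟨f, B, h', heq, _, _⟩ |
      ⟨U, B, C, h', heq, _, _, _⟩ | ⟨U, B, C, h', heq, _, _, _⟩ | ⟨U, B, C, h', heq, _, _, _, _⟩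
    · injection heq with ha; subst ha; exact ⟨L, hp, hc, hR, hle⟩
    all_goals simp at heq
  choose L hp hc hR hle using hdata
  set Li' : Fin n → List (Set ρ) := fun i => (L i).filter fun S => S ≠ Rs i with hLi'
  have F1 : ∀ i, ∀ S ∈ Li' i, S ⊆ (Rs i)ᶜ := by
    intro i S hS
    have hSL : S ∈ L i := (List.mem_filter.1 hS).1
    have hne : S ≠ Rs i := by simpa using (List.mem_filter.1 hS).2
    have hdisj' : Disjoint S (Rs i) :=
      (hp i).forall hSL (hR i) hne
    exact Set.subset_compl_iff_disjoint_right.2 hdisj'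
  have F2 : ∀ i, (Rs i)ᶜ ⊆ ⋃ S ∈ Li' i, S := by
    intro i x hx
    have hxu : x ∈ ⋃ S ∈ L i, S := by rw [hc i]; trivial
    obtain ⟨S, hSL, hxS⟩ := Set.mem_iUnion₂.1 hxu
    have hne : S ≠ Rs i := by rintro rfl; exact hx hxS
    exact Set.mem_biUnion (List.mem_filter.2 ⟨hSL, by simpa using hne⟩) hxS
  set Lstar : List (Set ρ) := (List.ofFn Li').flatten with hLstar
  have hpair : Lstar.Pairwise Disjoint := by
    refine List.pairwise_flatten.2 ⟨?_, ?_⟩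
    · intro l hl
      obtain ⟨i, rfl⟩ := List.mem_ofFn.1 hl
      exact List.Pairwise.sublist List.filter_sublist (hp i)
    · refine List.pairwise_ofFn.2 ?_
      intro i j hij x hx y hy
      exact Disjoint.mono (F1 i x hx) (F1 j y hy) (hdisj i j (Fin.ne_of_lt hij))
  have hcov : (⋃ S ∈ Lstar, S) = Set.univ := by
    refine subset_antisymm (Set.subset_univ _) ?_
    rw [← hcover]
    refine Set.iUnion_subset fun i => (F2 i).trans ?_
    refine Set.iUnion₂_subset fun S hS =>
      Set.subset_biUnion_of_mem (u := fun (S : Set ρ) => S)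
        (List.mem_flatten.2 ⟨Li' i, List.mem_ofFn.2 ⟨i, rfl⟩, hS⟩)
  have hsumatoms : atomsOf Lstar a = Finset.univ.sum fun i => atomsOf (Li' i) a := by
    rw [hLstar, atomsOf_flatten, List.map_ofFn, List.sum_ofFn]
    rfl
  have hleq : atomsOf Lstar a ≤ Finset.univ.sum Γs := by
    rw [hsumatoms]
    exact Finset.sum_le_sum fun i _ => hle i
  have hid := MDeriv.id' (Finset.univ.sum Γs - atomsOf Lstar a) a Lstar hpair hcov
  rwa [tsub_add_cancel_of_le hleq] at hid

theorem handler_neg {f : ρ → ρ} {B : MFormula ρ} {n : ℕ} {Rs : Fin n → Set ρ}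
    (hdisj : ∀ i j, i ≠ j → Disjoint (Rs i)ᶜ (Rs j)ᶜ)
    (hcover : (⋃ i, (Rs i)ᶜ) = Set.univ)
    (IHB : ∀ (Rs' : Fin n → Set ρ) (Γs' : Fin n → MSeq ρ),
      (∀ i j, i ≠ j → Disjoint (Rs' i)ᶜ (Rs' j)ᶜ) → (⋃ i, (Rs' i)ᶜ) = Set.univ →
      (∀ i, MDeriv ((Rs' i, B) ::ₘ Γs' i)) → MDeriv (Finset.univ.sum Γs'))
    (Γs : Fin n → MSeq ρ) (ms hs : Fin n → ℕ) (hn : 0 < n)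
    (CUT : ∀ (Γs' : Fin n → MSeq ρ) (ms' hs' : Fin n → ℕ),
        Finset.univ.sum hs' < Finset.univ.sum hs →
        (∀ i, MDerivH (hs' i) (Γs' i + (ms' i + 1) • ({(Rs i, MFormula.neg f B)} : MSeq ρ))) →
        MDeriv (Finset.univ.sum Γs'))
    (hd : ∀ i, MDerivH (hs i) (Γs i + (ms i + 1) • ({(Rs i, MFormula.neg f B)} : MSeq ρ)))
    (hprin : ∀ i, Prin (MFormula.neg f B) (Rs i) (Γs i) (hs i) (ms i)) :
    MDeriv (Finset.univ.sum Γs) := by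
  have hsub : ∀ i, MDeriv ((f ⁻¹' (Rs i), B) ::ₘ Finset.univ.sum Γs) := by
    intro i
    rcases hprin i with ⟨a', L, heq, _, _, _, _⟩ | ⟨f', B', h', heq, hlt, d⟩ |
      ⟨U, B', C', h', heq, _, _, _⟩ | ⟨U, B', C', h', heq, _, _, _⟩ | ⟨U, B', C', h', heq, _, _, _, _⟩
    case pneg =>
      injection heq with h1 h2
      subst h1; subst h2
      exact buildF CUT hd i _ hlt d
    all_goals simp at heq
  have hdisj' : ∀ i j, i ≠ j → Disjoint (f ⁻¹' (Rs i))ᶜ (f ⁻¹' (Rs j))ᶜ := by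
    intro i j hij
    rw [← Set.preimage_compl, ← Set.preimage_compl]
    exact (hdisj i j hij).preimage f
  have hcover' : (⋃ i, (f ⁻¹' (Rs i))ᶜ) = Set.univ := by
    simp only [← Set.preimage_compl, ← Set.preimage_iUnion, hcover, Set.preimage_univ]
  have hres := IHB (fun i => f ⁻¹' (Rs i)) (fun _ => Finset.univ.sum Γs) hdisj' hcover' hsub
  rw [Finset.sum_const, Finset.card_univ, Fintype.card_fin] at hres
  obtain ⟨k, rfl⟩ : ∃ k, n = k + 1 := ⟨n - 1, (Nat.succ_pred_eq_of_pos hn).symm⟩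
  exact MDeriv.of_nsmul k hres

theorem handler_conj {U : Ultrafilter ρ} {B C : MFormula ρ} {n : ℕ} {Rs : Fin n → Set ρ}
    (hdisj : ∀ i j, i ≠ j → Disjoint (Rs i)ᶜ (Rs j)ᶜ)
    (hcover : (⋃ i, (Rs i)ᶜ) = Set.univ)
    (IHB : ∀ (Rs' : Fin n → Set ρ) (Γs' : Fin n → MSeq ρ),
      (∀ i j, i ≠ j → Disjoint (Rs' i)ᶜ (Rs' j)ᶜ) → (⋃ i, (Rs' i)ᶜ) = Set.univ →
      (∀ i, MDeriv ((Rs' i, B) ::ₘ Γs' i)) → MDeriv (Finset.univ.sum Γs'))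
    (IHC : ∀ (Rs' : Fin n → Set ρ) (Γs' : Fin n → MSeq ρ),
      (∀ i j, i ≠ j → Disjoint (Rs' i)ᶜ (Rs' j)ᶜ) → (⋃ i, (Rs' i)ᶜ) = Set.univ →
      (∀ i, MDeriv ((Rs' i, C) ::ₘ Γs' i)) → MDeriv (Finset.univ.sum Γs'))
    (Γs : Fin n → MSeq ρ) (ms hs : Fin n → ℕ) (hn : 0 < n)
    (CUT : ∀ (Γs' : Fin n → MSeq ρ) (ms' hs' : Fin n → ℕ),
        Finset.univ.sum hs' < Finset.univ.sum hs →
        (∀ i, MDerivH (hs' i) (Γs' i + (ms' i + 1) • ({(Rs i, MFormula.conj U B C)} : MSeq ρ))) →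
        MDeriv (Finset.univ.sum Γs'))
    (hd : ∀ i, MDerivH (hs i) (Γs i + (ms i + 1) • ({(Rs i, MFormula.conj U B C)} : MSeq ρ)))
    (hprin : ∀ i, Prin (MFormula.conj U B C) (Rs i) (Γs i) (hs i) (ms i)) :
    MDeriv (Finset.univ.sum Γs) := by
  -- exactly one `j₀` has `(Rs j₀)ᶜ ∈ U`
  have hex : ∃ i, (Rs i)ᶜ ∈ U := by
    have huniv : (⋃ i ∈ (Set.univ : Set (Fin n)), (Rs i)ᶜ) ∈ U := by
      rw [Set.biUnion_univ, hcover]; exact Filter.univ_mem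
    obtain ⟨i, _, hi⟩ := (Ultrafilter.finite_biUnion_mem_iff Set.finite_univ).1 huniv
    exact ⟨i, hi⟩
  obtain ⟨j₀, hj₀⟩ := hex
  have hnotU : Rs j₀ ∉ U := Ultrafilter.compl_mem_iff_notMem.1 hj₀
  have hinU : ∀ i, i ≠ j₀ → Rs i ∈ U := by
    intro i hne
    by_contra hni
    have h1 : (Rs i)ᶜ ∈ U := Ultrafilter.compl_mem_iff_notMem.2 hni
    have h2 : ((Rs i)ᶜ ∩ (Rs j₀)ᶜ) ∈ U := Filter.inter_mem h1 hj₀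
    rw [Set.disjoint_iff_inter_eq_empty.1 (hdisj i j₀ hne)] at h2
    exact Filter.empty_notMem (U : Filter ρ) h2
  -- the `j₀` premise ends in a left or right negative conjunction rule
  rcases hprin j₀ with ⟨a', L, heq, _, _, _, _⟩ | ⟨f', B', h', heq, _, _⟩ |
    ⟨U', B', C', h', heq, hU', hlt₀, d₀⟩ | ⟨U', B', C', h', heq, hU', hlt₀, d₀⟩ |
    ⟨U', B', C', h', heq, hU', hlt₀, d₀, _⟩
  case pconjL =>
    injection heq with h1 h2 h3
    subst h1; subst h2; subst h3
    have hsub : ∀ i, MDeriv ((Rs i, B) ::ₘ Finset.univ.sum Γs) := by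
      intro i
      rcases eq_or_ne i j₀ with rfl | hne
      · exact buildF CUT hd i _ hlt₀ d₀
      · rcases hprin i with ⟨a', L, heq, _, _, _, _⟩ | ⟨f', B', h', heq, _, _⟩ |
          ⟨U', B', C', h', heq, hU'', hlt, d⟩ | ⟨U', B', C', h', heq, hU'', hlt, d⟩ |
          ⟨U', B', C', h', heq, hU'', hlt, d, d2⟩
        case pconjP =>
          injection heq with h1 h2 h3
          subst h1; subst h2; subst h3
          exact buildF CUT hd i _ hlt d
        case pconjL =>
          injection heq with h1 h2 h3; subst h1
          exact absurd (hinU i hne) hU''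
        case pconjR =>
          injection heq with h1 h2 h3; subst h1
          exact absurd (hinU i hne) hU''
        all_goals simp at heq
    have hres := IHB Rs (fun _ => Finset.univ.sum Γs) hdisj hcover hsub
    rw [Finset.sum_const, Finset.card_univ, Fintype.card_fin] at hres
    obtain ⟨k, rfl⟩ : ∃ k, n = k + 1 := ⟨n - 1, (Nat.succ_pred_eq_of_pos hn).symm⟩
    exact MDeriv.of_nsmul k hres
  case pconjR =>
    injection heq with h1 h2 h3
    subst h1; subst h2; subst h3
    have hsub : ∀ i, MDeriv ((Rs i, C) ::ₘ Finset.univ.sum Γs) := by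
      intro i
      rcases eq_or_ne i j₀ with rfl | hne
      · exact buildF CUT hd i _ hlt₀ d₀
      · rcases hprin i with ⟨a', L, heq, _, _, _, _⟩ | ⟨f', B', h', heq, _, _⟩ |
          ⟨U', B', C', h', heq, hU'', hlt, d⟩ | ⟨U', B', C', h', heq, hU'', hlt, d⟩ |
          ⟨U', B', C', h', heq, hU'', hlt, d1, d⟩
        case pconjP =>
          injection heq with h1 h2 h3
          subst h1; subst h2; subst h3
          exact buildF CUT hd i _ hlt d
        case pconjL =>
          injection heq with h1 h2 h3; subst h1
          exact absurd (hinU i hne) hU''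
        case pconjR =>
          injection heq with h1 h2 h3; subst h1
          exact absurd (hinU i hne) hU''
        all_goals simp at heq
    have hres := IHC Rs (fun _ => Finset.univ.sum Γs) hdisj hcover hsub
    rw [Finset.sum_const, Finset.card_univ, Fintype.card_fin] at hres
    obtain ⟨k, rfl⟩ : ∃ k, n = k + 1 := ⟨n - 1, (Nat.succ_pred_eq_of_pos hn).symm⟩
    exact MDeriv.of_nsmul k hres
  case pconjP =>
    injection heq with h1 h2 h3; subst h1
    exact absurd hU' hnotU
  all_goals simp at heq

theorem multicut (A : MFormula ρ) : ∀ (n : ℕ) (Rs : Fin n → Set ρ) (Γs : Fin n → MSeq ρ),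
    (∀ i j, i ≠ j → Disjoint (Rs i)ᶜ (Rs j)ᶜ) → (⋃ i, (Rs i)ᶜ) = Set.univ →
    (∀ i, MDeriv ((Rs i, A) ::ₘ Γs i)) → MDeriv (Finset.univ.sum Γs) := by
  induction A with
  | atom a =>
      intro n Rs Γs hdisj hcover hder
      exact loop (.atom a) Rs hdisj hcover
        (fun Γs ms hs _ _ _ hprin => handler_atom hdisj hcover Γs ms hs hprin) Γs hder
  | neg f B ihB =>
      intro n Rs Γs hdisj hcover hder
      exact loop (.neg f B) Rs hdisj hcover
        (fun Γs ms hs hn CUT hd hprin =>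
          handler_neg hdisj hcover (ihB n) Γs ms hs hn CUT hd hprin) Γs hder
  | conj U B C ihB ihC =>
      intro n Rs Γs hdisj hcover hder
      exact loop (.conj U B C) Rs hdisj hcover
        (fun Γs ms hs hn CUT hd hprin =>
          handler_conj hdisj hcover (ihB n) (ihC n) Γs ms hs hn CUT hd hprin) Γs hder

end MRLcut

/-- Multiparty cut (mp-cut) is admissible in MRL. -/
theorem mrl_mp_cut {ρ : Type} (n : ℕ) (hn : 1 ≤ n)
    (Rs : Fin n → Set ρ) (Γs : Fin n → MSeq ρ) (A : MFormula ρ)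
    (hdisj : ∀ i j, i ≠ j → Disjoint (Rs i)ᶜ (Rs j)ᶜ)
    (hcover : (⋃ i, (Rs i)ᶜ) = Set.univ)
    (hder : ∀ i, MDeriv ((Rs i, A) ::ₘ Γs i)) :
    MDeriv (Finset.univ.sum Γs) :=
  MRLcut.multicut A n Rs Γs hdisj hcover hder
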